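/- Let n ≥ 2 and let Q be the quadratic form on EuclideanSpace ℝ (Fin n) given by Q x = -‖x‖², with Clifford algebra Cl_n = CliffordAlgebra Q and canonical embedding ι. The Cauchy kernel G : EuclideanSpace ℝ (Fin n) \ {0} → Cl_n defined by G(x) = -‖x‖^{-n} • ι(x) is both left monogenic and right monogenic away from the origin: for every x ≠ 0, ∑_i ι(e_i) * (∂_i G)(x) = 0 and ∑_i (∂_i G)(x) * ι(e_i) = 0. -/

import Mathlib

open Function
open scoped ENNReal

noncomputable section

/-- The inclusion of finitely supported functions into `ℓ^∞`. -/
def finsuppToLp (ι : Type*) : (ι →₀ ℝ) →ₗ[ℝ] lp (fun _ : ι => ℝ) ∞ where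
  toFun v := ⟨fun i => v i, by
    apply memℓp_infty
    apply Set.Finite.bddAbove
    apply Set.Finite.subset ((v.support.finite_toSet.image (fun i => ‖v i‖)).insert 0)
    rintro - ⟨i, rfl⟩
    by_cases h : v i = 0
    · simp [h]
    · exact Set.mem_insert_of_mem _ ⟨i, by simpa [Finsupp.mem_support_iff] using h, rfl⟩⟩
  map_add' v w := by ext i; rfl
  map_smul' c v := by ext i; rfl

lemma finsuppToLp_injective (ι : Type*) : Injective (finsuppToLp ι) := by
  intro v w h
  ext i
  exact congrArg (fun f : lp (fun _ : ι => ℝ) ∞ => (f : ι → ℝ) i) h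

/-- A norm on an arbitrary real vector space, obtained from a Hamel basis and the embedding
into `ℓ^∞`.  This makes the Fréchet derivative available for Clifford-algebra valued maps;
since the Clifford algebra of a finite-dimensional quadratic space is finite dimensional,
all norms on it are equivalent, so the statements below do not depend on this choice. -/
def Module.toNormedAddCommGroup (V : Type*) [AddCommGroup V] [Module ℝ V] :
    NormedAddCommGroup V :=
  NormedAddCommGroup.induced V _
    ((finsuppToLp _).comp (Basis.ofVectorSpace ℝ V).repr.toLinearMap)
    ((finsuppToLp_injective _).comp (Basis.ofVectorSpace ℝ V).repr.injective)

def Module.toNormedSpace (V : Type*) [AddCommGroup V] [Module ℝ V] :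
    @NormedSpace ℝ V _ (Module.toNormedAddCommGroup V).toSeminormedAddCommGroup :=
  NormedSpace.induced ℝ V _ ((finsuppToLp _).comp (Basis.ofVectorSpace ℝ V).repr.toLinearMap)

noncomputable instance {n : ℕ} (Q : QuadraticForm ℝ (EuclideanSpace ℝ (Fin n))) :
    NormedAddCommGroup (CliffordAlgebra Q) := Module.toNormedAddCommGroup _

noncomputable instance {n : ℕ} (Q : QuadraticForm ℝ (EuclideanSpace ℝ (Fin n))) :
    NormedSpace ℝ (CliffordAlgebra Q) := Module.toNormedSpace _

instance cliffordAlgebra_isTopologicalAddGroup {n : ℕ} (Q : QuadraticForm ℝ (EuclideanSpace ℝ (Fin n))) :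
    IsTopologicalAddGroup (CliffordAlgebra Q) :=
  SeminormedAddCommGroup.toIsTopologicalAddGroup

instance cliffordAlgebra_isBoundedSMul {n : ℕ} (Q : QuadraticForm ℝ (EuclideanSpace ℝ (Fin n))) :
    IsBoundedSMul ℝ (CliffordAlgebra Q) :=
  NormedSpace.toIsBoundedSMul

instance cliffordAlgebra_continuousSMul {n : ℕ} (Q : QuadraticForm ℝ (EuclideanSpace ℝ (Fin n))) :
    ContinuousSMul ℝ (CliffordAlgebra Q) :=
  IsBoundedSMul.continuousSMul

def cliffordAlgebra_isScalarTower {n : ℕ} (Q : QuadraticForm ℝ (EuclideanSpace ℝ (Fin n))) :=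
  @IsScalarTower.left ℝ (CliffordAlgebra Q) _
    (NormedSpace.toModule (𝕜 := ℝ) (E := CliffordAlgebra Q)).toDistribMulAction.toMulAction

attribute [instance] cliffordAlgebra_isScalarTower

/-- The standard orthonormal basis vector `e i` of Euclidean space. -/
def e {n : ℕ} (i : Fin n) : EuclideanSpace ℝ (Fin n) := EuclideanSpace.single i 1

/-- The Cauchy kernel `G x = -‖x‖⁻ⁿ • ι x` is left and right monogenic
away from the origin. -/
theorem cauchyKernel_monogenic (n : ℕ) (hn : 2 ≤ n)
    (Q : QuadraticForm ℝ (EuclideanSpace ℝ (Fin n)))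
    (hQ : ∀ x, Q x = -‖x‖ ^ 2)
    (G : EuclideanSpace ℝ (Fin n) → CliffordAlgebra Q)
    (hG : ∀ x, G x = -((‖x‖ ^ n)⁻¹ • CliffordAlgebra.ι Q x))
    (x : EuclideanSpace ℝ (Fin n)) (hx : x ≠ 0) :
    (∑ i, CliffordAlgebra.ι Q (e i) * fderiv ℝ G x (e i) = 0) ∧
    (∑ i, fderiv ℝ G x (e i) * CliffordAlgebra.ι Q (e i) = 0) := by
  classical
  have hxn : ‖x‖ ≠ 0 := norm_ne_zero_iff.mpr hx
  have hxpos : (0:ℝ) < ‖x‖ := norm_pos_iff.mpr hx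
  set p : ℝ := -(n:ℝ)/2 with hp
  set t : ℝ := ‖x‖ ^ 2 with ht
  have htpos : (0:ℝ) < t := by positivity
  -- rewrite G using rpow
  have haux : ∀ r : ℝ, 0 ≤ r → (r ^ 2 : ℝ) ^ p = (r ^ n)⁻¹ := by
    intro r hr
    rw [← Real.rpow_natCast r 2, ← Real.rpow_natCast r n, ← Real.rpow_mul hr,
      ← Real.rpow_neg hr]
    norm_num [hp]
    ring_nf
    rw [Real.rpow_neg hr, Real.rpow_natCast, inv_pow]
  have hGfun : G = fun y => -(((‖y‖ ^ 2 : ℝ) ^ p) • CliffordAlgebra.ι Q y) := by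
    funext y
    rw [hG, haux ‖y‖ (norm_nonneg y)]
  -- the linear map ι as a continuous linear map
  set ιL : EuclideanSpace ℝ (Fin n) →L[ℝ] CliffordAlgebra Q :=
    LinearMap.toContinuousLinearMap (CliffordAlgebra.ι Q) with hιL
  have hι : HasFDerivAt (fun y : EuclideanSpace ℝ (Fin n) => CliffordAlgebra.ι Q y) ιL x :=
    ιL.hasFDerivAt
  have hsq : HasFDerivAt (fun y : EuclideanSpace ℝ (Fin n) => ‖y‖ ^ 2)
      (2 • (innerSL ℝ x)) x := (hasStrictFDerivAt_norm_sq x).hasFDerivAt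
  have hrpow : HasDerivAt (fun s : ℝ => s ^ p) (p * t ^ (p - 1)) t :=
    Real.hasDerivAt_rpow_const (Or.inl htpos.ne')
  have hc : HasFDerivAt (fun y : EuclideanSpace ℝ (Fin n) => ((‖y‖ ^ 2 : ℝ) ^ p))
      ((p * t ^ (p - 1)) • (2 • (innerSL ℝ x))) x :=
    (hrpow.comp_hasFDerivAt x hsq :)
  have hD : HasFDerivAt G
      (-(((‖x‖ ^ 2 : ℝ) ^ p) • ιL +
        ((p * t ^ (p - 1)) • (2 • (innerSL ℝ x))).smulRight (CliffordAlgebra.ι Q x))) x := by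
    rw [hGfun]
    exact (hc.smul hι).neg
  set A : ℝ := -(t ^ p) with hA
  set K : ℝ := (n : ℝ) * t ^ (p - 1) with hK
  have hfd : ∀ v : EuclideanSpace ℝ (Fin n), fderiv ℝ G x v =
      A • CliffordAlgebra.ι Q v + (K * (inner ℝ x v : ℝ)) • CliffordAlgebra.ι Q x := by
    intro v
    rw [hD.fderiv]
    simp only [ContinuousLinearMap.neg_apply, ContinuousLinearMap.add_apply,
      ContinuousLinearMap.smul_apply, ContinuousLinearMap.smulRight_apply,
      ContinuousLinearMap.coe_smul', Pi.smul_apply, innerSL_apply_apply, hιL,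
      LinearMap.coe_toContinuousLinearMap']
    rw [neg_add, ← neg_smul, ← neg_smul, hA, hK, ← ht]
    congr 2
    simp only [smul_eq_mul]; push_cast [hp]; ring
  -- basic facts
  have hQe : ∀ i : Fin n, Q (e i) = -1 := by
    intro i
    rw [hQ]
    simp [e, EuclideanSpace.norm_single]
  have hinner : ∀ i : Fin n, (inner ℝ x (e i) : ℝ) = x i := by
    intro i
    simp [e, EuclideanSpace.inner_single_right]
  have hxsum : (∑ i, x i • e i) = x := by
    ext j
    simp only [PiLp.smul_apply, smul_eq_mul, e]
    rw [WithLp.ofLp_sum, Finset.sum_apply]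
    simp [EuclideanSpace.single_apply]
  have hιx : CliffordAlgebra.ι Q x = ∑ i, x i • CliffordAlgebra.ι Q (e i) := by
    conv_lhs => rw [← hxsum]
    simp [map_sum]
  -- scalar identity
  have hscal : A * (-1) * (n : ℝ) + K * (Q x) = 0 := by
    rw [hQ, hA, hK, Real.rpow_sub htpos, Real.rpow_one, ← ht]
    field_simp
    ring
  -- key sums
  have hsum1 : (∑ i, (x i) • (CliffordAlgebra.ι Q (e i) * CliffordAlgebra.ι Q x))
      = CliffordAlgebra.ι Q x * CliffordAlgebra.ι Q x := by
    simp_rw [← smul_mul_assoc]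
    rw [← Finset.sum_mul, ← hιx]
  have hsum2 : (∑ i, (x i) • (CliffordAlgebra.ι Q x * CliffordAlgebra.ι Q (e i)))
      = CliffordAlgebra.ι Q x * CliffordAlgebra.ι Q x := by
    have : ∀ i : Fin n, (x i) • (CliffordAlgebra.ι Q x * CliffordAlgebra.ι Q (e i))
        = CliffordAlgebra.ι Q x * ((x i) • CliffordAlgebra.ι Q (e i)) := by
      intro i; rw [mul_smul_comm]
    simp_rw [this]
    rw [← Finset.mul_sum, ← hιx]
  have hscal' : (n : ℝ) • (A * -1) + K * (Q x) = 0 := by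
    rw [smul_eq_mul]; linear_combination hscal
  have h1 : (A • algebraMap ℝ (CliffordAlgebra Q) (-1)) = algebraMap ℝ _ (A * -1) := by
    rw [Algebra.smul_def, ← map_mul]
  constructor
  · simp_rw [hfd, hinner, mul_add, mul_smul_comm, CliffordAlgebra.ι_sq_scalar, hQe]
    rw [Finset.sum_add_distrib]
    have h2 : (∑ i : Fin n, (K * x i) • (CliffordAlgebra.ι Q (e i) * CliffordAlgebra.ι Q x))
        = algebraMap ℝ _ (K * Q x) := by
      simp_rw [mul_smul]
      rw [← Finset.smul_sum, hsum1, CliffordAlgebra.ι_sq_scalar, Algebra.smul_def, ← map_mul]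
    rw [h2, h1, Finset.sum_const, Finset.card_univ, Fintype.card_fin, ← map_nsmul,
      ← map_add]
    rw [show ((n : ℕ) • (A * -1) : ℝ) = (n : ℝ) • (A * -1) by simp, hscal', map_zero]
  · simp_rw [hfd, hinner, add_mul, smul_mul_assoc, CliffordAlgebra.ι_sq_scalar, hQe]
    rw [Finset.sum_add_distrib]
    have h2 : (∑ i : Fin n, (K * x i) • (CliffordAlgebra.ι Q x * CliffordAlgebra.ι Q (e i)))
        = algebraMap ℝ _ (K * Q x) := by
      simp_rw [mul_smul]
      rw [← Finset.smul_sum, hsum2, CliffordAlgebra.ι_sq_scalar, Algebra.smul_def, ← map_mul]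
    rw [h2, h1, Finset.sum_const, Finset.card_univ, Fintype.card_fin, ← map_nsmul,
      ← map_add]
    rw [show ((n : ℕ) • (A * -1) : ℝ) = (n : ℝ) • (A * -1) by simp, hscal', map_zero]
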